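/- Let A and Σ_Z be commuting real symmetric positive definite n×n matrices with A ⪯ I, and let Σ_X be real symmetric positive definite. Then det(Σ_X + A^{1/2}·Σ_Z·A^{1/2})^(1/n) ≥ det(I−A)^(1/n)·det(Σ_X)^(1/n) + det(A)^(1/n)·det(Σ_X + Σ_Z)^(1/n). (Gaussian case of the corrected vector Costa EPI.) -/

import Mathlib

open Matrix

/-- The square root of a positive semidefinite matrix, as defined in the older Mathlib
(`Matrix.PosSemidef.sqrt`, removed since). -/
noncomputable def Matrix.PosSemidef.sqrt {n : Type*} [Fintype n] [DecidableEq n]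
    {A : Matrix n n ℝ} (hA : A.PosSemidef) : Matrix n n ℝ :=
  hA.1.eigenvectorUnitary.1 * diagonal ((↑) ∘ (√·) ∘ hA.1.eigenvalues) *
    (star hA.1.eigenvectorUnitary : Matrix n n ℝ)

lemma Matrix.PosSemidef.sqrt_eq_aux {n : Type*} [Fintype n] [DecidableEq n]
    {A : Matrix n n ℝ} (hA : A.PosSemidef) :
    hA.sqrt = (hA.1.eigenvectorUnitary : Matrix n n ℝ) *
      diagonal (fun i => Real.sqrt (hA.1.eigenvalues i)) *
      star (hA.1.eigenvectorUnitary : Matrix n n ℝ) := by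
  rw [Matrix.PosSemidef.sqrt]
  norm_num [Function.comp_def]

lemma Matrix.PosSemidef.sqrt_mul_self {n : Type*} [Fintype n] [DecidableEq n]
    {A : Matrix n n ℝ} (hA : A.PosSemidef) : hA.sqrt * hA.sqrt = A := by
  set U : Matrix n n ℝ := (hA.1.eigenvectorUnitary : Matrix n n ℝ) with hU
  have hUU : star U * U = 1 := (Matrix.mem_unitaryGroup_iff').mp hA.1.eigenvectorUnitary.2
  set a : n → ℝ := hA.1.eigenvalues with ha
  have hspec : A = U * Matrix.diagonal a * star U := by
    have := hA.1.spectral_theorem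
    simpa [a, U] using this
  rw [hA.sqrt_eq_aux]
  conv_rhs => rw [hspec]
  calc U * diagonal (fun i => Real.sqrt (a i)) * star U * (U * diagonal (fun i => Real.sqrt (a i)) * star U)
      = U * (diagonal (fun i => Real.sqrt (a i)) * (star U * U) *
          diagonal (fun i => Real.sqrt (a i))) * star U := by simp only [Matrix.mul_assoc]
    _ = U * Matrix.diagonal a * star U := by
      rw [hUU, Matrix.mul_one, diagonal_mul_diagonal]
      congr 3
      funext i
      exact Real.mul_self_sqrt (hA.eigenvalues_nonneg i)

lemma Matrix.PosSemidef.posSemidef_sqrt {n : Type*} [Fintype n] [DecidableEq n]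
    {A : Matrix n n ℝ} (hA : A.PosSemidef) : hA.sqrt.PosSemidef := by
  rw [hA.sqrt_eq_aux]
  have hD : (diagonal (fun i => Real.sqrt (hA.1.eigenvalues i))).PosSemidef :=
    Matrix.posSemidef_diagonal_iff.mpr (fun i => Real.sqrt_nonneg _)
  exact hD.mul_mul_conjTranspose_same _

variable {m : Type*} [Fintype m] [DecidableEq m]

lemma psd_det_nonneg {M : Matrix m m ℝ} (hM : M.PosSemidef) : 0 ≤ M.det := by
  rw [hM.1.det_eq_prod_eigenvalues]
  exact Finset.prod_nonneg fun i _ => hM.eigenvalues_nonneg i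

lemma sqrt_commute {A B : Matrix m m ℝ} (hA : A.PosSemidef) (h : A * B = B * A) :
    hA.sqrt * B = B * hA.sqrt := by
  set U : Matrix m m ℝ := (hA.1.eigenvectorUnitary : Matrix m m ℝ) with hU
  have hUU : star U * U = 1 := (Matrix.mem_unitaryGroup_iff').mp hA.1.eigenvectorUnitary.2
  have hUU' : U * star U = 1 := (Matrix.mem_unitaryGroup_iff).mp hA.1.eigenvectorUnitary.2
  set a : m → ℝ := hA.1.eigenvalues with ha
  have hspec : A = U * Matrix.diagonal a * star U := by
    have := hA.1.spectral_theorem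
    simpa [a, U] using this
  set C : Matrix m m ℝ := star U * B * U with hC
  have hDC : Matrix.diagonal a * C = C * Matrix.diagonal a := by
    have hD : Matrix.diagonal a = star U * A * U := by
      rw [hspec]; simp only [← Matrix.mul_assoc]
      rw [hUU, Matrix.one_mul, Matrix.mul_assoc, hUU, Matrix.mul_one]
    rw [hD, hC]
    calc star U * A * U * (star U * B * U) = star U * (A * (U * star U) * B) * U := by
          simp only [Matrix.mul_assoc]
      _ = star U * (A * B) * U := by rw [hUU']; simp only [Matrix.mul_one, Matrix.mul_assoc]
      _ = star U * (B * A) * U := by rw [h]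
      _ = star U * (B * (U * star U) * A) * U := by rw [hUU']; simp only [Matrix.mul_one, Matrix.mul_assoc]
      _ = star U * B * U * (star U * A * U) := by simp only [Matrix.mul_assoc]
  set E : Matrix m m ℝ := Matrix.diagonal (fun i => Real.sqrt (a i)) with hE
  have hEC : E * C = C * E := by
    ext i j
    rw [hE, Matrix.diagonal_mul, Matrix.mul_diagonal]
    have h1 : a i * C i j = C i j * a j := by
      have := congrFun (congrFun hDC i) j
      simpa [Matrix.diagonal_mul, Matrix.mul_diagonal] using this
    rcases eq_or_ne (a i) (a j) with he | hne
    · rw [he, mul_comm]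
    · have : C i j = 0 := by
        have h2 : C i j * (a i - a j) = 0 := by nlinarith [h1]
        rcases mul_eq_zero.mp h2 with h3 | h3
        · exact h3
        · exact absurd (sub_eq_zero.mp h3) hne
      simp [this]
  have hB : B = U * C * star U := by
    rw [hC]; simp only [← Matrix.mul_assoc]
    rw [hUU', Matrix.one_mul, Matrix.mul_assoc, hUU', Matrix.mul_one]
  have hsqrt : hA.sqrt = U * E * star U := by
    rw [Matrix.PosSemidef.sqrt, hE]
    norm_num [Function.comp_def]
    rfl
  rw [hsqrt, hB]
  calc U * E * star U * (U * C * star U) = U * (E * (star U * U * C)) * star U := by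
        simp only [Matrix.mul_assoc]
    _ = U * (E * C) * star U := by rw [hUU, Matrix.one_mul]
    _ = U * (C * E) * star U := by rw [hEC]
    _ = U * (C * (star U * U * E)) * star U := by rw [hUU, Matrix.one_mul]
    _ = U * C * star U * (U * E * star U) := by simp only [Matrix.mul_assoc]

lemma mahler_det {n : ℕ} (hn : 0 < n) {R : Matrix (Fin n) (Fin n) ℝ}
    (hR : R.PosSemidef) (hR1 : ((1:Matrix (Fin n) (Fin n) ℝ) - R).PosSemidef) :
    R.det ^ ((n:ℝ)⁻¹) + ((1:Matrix (Fin n) (Fin n) ℝ) - R).det ^ ((n:ℝ)⁻¹) ≤ 1 := by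
  set U : Matrix (Fin n) (Fin n) ℝ := (hR.1.eigenvectorUnitary : Matrix (Fin n) (Fin n) ℝ) with hU
  have hUU : star U * U = 1 := (Matrix.mem_unitaryGroup_iff').mp hR.1.eigenvectorUnitary.2
  have hUU' : U * star U = 1 := (Matrix.mem_unitaryGroup_iff).mp hR.1.eigenvectorUnitary.2
  set a : Fin n → ℝ := hR.1.eigenvalues with ha
  have hspec : R = U * Matrix.diagonal a * star U := by
    have := hR.1.spectral_theorem
    simpa [a, U] using this
  have hdetconj : ∀ M : Matrix (Fin n) (Fin n) ℝ, (U * M * star U).det = M.det := by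
    intro M
    rw [Matrix.det_mul, Matrix.det_mul]
    calc U.det * M.det * (star U).det = M.det * ((star U).det * U.det) := by ring
      _ = M.det * ((star U) * U).det := by rw [Matrix.det_mul]
      _ = M.det := by rw [hUU, Matrix.det_one, mul_one]
  have h1A : (1:Matrix (Fin n) (Fin n) ℝ) - R = U * Matrix.diagonal (fun i => 1 - a i) * star U := by
    have hd : Matrix.diagonal (fun i => 1 - a i) =
        (1 : Matrix (Fin n) (Fin n) ℝ) - Matrix.diagonal a := by
      rw [← Matrix.diagonal_one, Matrix.diagonal_sub]
    rw [hd, Matrix.mul_sub, Matrix.sub_mul, Matrix.mul_one, hUU', ← hspec]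
  have ha0 : ∀ i, 0 ≤ a i := fun i => hR.eigenvalues_nonneg i
  have ha1 : ∀ i, a i ≤ 1 := by
    have hpsd : (Matrix.diagonal (fun i => 1 - a i)).PosSemidef := by
      have hconj := hR1.mul_mul_conjTranspose_same (star U)
      have hstar : (star U)ᴴ = U := by rw [← Matrix.star_eq_conjTranspose, star_star]
      rw [hstar] at hconj
      have he : star U * ((1:Matrix (Fin n) (Fin n) ℝ) - R) * U
          = Matrix.diagonal (fun i => 1 - a i) := by
        rw [h1A]
        calc star U * (U * Matrix.diagonal (fun i => 1 - a i) * star U) * U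
            = (star U * U) * Matrix.diagonal (fun i => 1 - a i) * (star U * U) := by
              simp only [Matrix.mul_assoc]
          _ = Matrix.diagonal (fun i => 1 - a i) := by rw [hUU, Matrix.one_mul, Matrix.mul_one]
      rwa [he] at hconj
    intro i
    have := Matrix.posSemidef_diagonal_iff.mp hpsd i
    linarith
  have hdR : R.det = ∏ i, a i := by rw [hspec, hdetconj, Matrix.det_diagonal]
  have hdR1 : ((1:Matrix (Fin n) (Fin n) ℝ) - R).det = ∏ i, (1 - a i) := by
    rw [h1A, hdetconj, Matrix.det_diagonal]
  -- now the scalar part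
  have hw : ∀ i ∈ Finset.univ, (0:ℝ) ≤ (fun _ : Fin n => (n:ℝ)⁻¹) i :=
    fun i _ => by positivity
  have hw' : ∑ _i ∈ (Finset.univ : Finset (Fin n)), (n:ℝ)⁻¹ = 1 := by
    simp [Finset.sum_const, Finset.card_univ]
    field_simp
  have h1 : R.det ^ ((n:ℝ)⁻¹) ≤ ∑ i, (n:ℝ)⁻¹ * a i := by
    rw [hdR, ← Real.finset_prod_rpow _ _ (fun i _ => ha0 i)]
    exact Real.geom_mean_le_arith_mean_weighted Finset.univ _ _ hw hw' (fun i _ => ha0 i)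
  have h2 : ((1:Matrix (Fin n) (Fin n) ℝ) - R).det ^ ((n:ℝ)⁻¹) ≤ ∑ i, (n:ℝ)⁻¹ * (1 - a i) := by
    rw [hdR1, ← Real.finset_prod_rpow _ _ (fun i _ => by linarith [ha1 i])]
    exact Real.geom_mean_le_arith_mean_weighted Finset.univ _ _ hw hw'
      (fun i _ => by linarith [ha1 i])
  have h3 : (∑ i, (n:ℝ)⁻¹ * a i) + (∑ i, (n:ℝ)⁻¹ * (1 - a i)) = 1 := by
    rw [← Finset.sum_add_distrib]
    have : ∀ i ∈ (Finset.univ : Finset (Fin n)),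
        (n:ℝ)⁻¹ * a i + (n:ℝ)⁻¹ * (1 - a i) = (n:ℝ)⁻¹ := by
      intro i _; ring
    rw [Finset.sum_congr rfl this]
    exact hw'
  linarith

lemma main_aux {n : ℕ} (hn : 0 < n) (A SZ SX W : Matrix (Fin n) (Fin n) ℝ)
    (hA : A.PosDef) (hZ : SZ.PosSemidef) (hX : SX.PosDef)
    (hAI : (1 - A).PosSemidef)
    (hWW : W * W = SZ) (hWH : Wᴴ = W) (hWA : W * A = A * W) :
    (1 - A).det ^ ((n : ℝ)⁻¹) * SX.det ^ ((n : ℝ)⁻¹) +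
        A.det ^ ((n : ℝ)⁻¹) * (SX + SZ).det ^ ((n : ℝ)⁻¹)
      ≤ (SX + W * A * W).det ^ ((n : ℝ)⁻¹) := by
  have hAdu : IsUnit A.det := isUnit_iff_ne_zero.mpr hA.det_pos.ne'
  have hXdu : IsUnit SX.det := isUnit_iff_ne_zero.mpr hX.det_pos.ne'
  set K : Matrix (Fin n) (Fin n) ℝ := A⁻¹ + W * SX⁻¹ * W with hKdef
  have hWXW : (W * SX⁻¹ * W).PosSemidef := by
    have := hX.inv.posSemidef.mul_mul_conjTranspose_same W
    rwa [hWH] at this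
  have hK : K.PosDef := hA.inv.add_posSemidef hWXW
  have hKdu : IsUnit K.det := isUnit_iff_ne_zero.mpr hK.det_pos.ne'
  set G : Matrix (Fin n) (Fin n) ℝ := K⁻¹ with hGdef
  have hG : G.PosDef := hK.inv
  have hGK : G * K = K * G := by
    rw [hGdef, Matrix.nonsing_inv_mul K hKdu, Matrix.mul_nonsing_inv K hKdu]
  obtain ⟨V, hVV, hVH, hVK⟩ : ∃ V : Matrix (Fin n) (Fin n) ℝ,
      V * V = G ∧ Vᴴ = V ∧ V * K = K * V :=
    ⟨hG.posSemidef.sqrt, hG.posSemidef.sqrt_mul_self,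
      hG.posSemidef.posSemidef_sqrt.1, sqrt_commute hG.posSemidef hGK⟩
  have hVKV : V * K * V = 1 := by
    rw [hVK, Matrix.mul_assoc, hVV, hGdef, Matrix.mul_nonsing_inv K hKdu]
  set H : Matrix (Fin n) (Fin n) ℝ := A⁻¹ - 1 with hHdef
  have hHpsd : H.PosSemidef := by
    have hAinvA : A⁻¹ * A = A * A⁻¹ := by
      rw [Matrix.nonsing_inv_mul A hAdu, Matrix.mul_nonsing_inv A hAdu]
    obtain ⟨VA, hsq, hVAH, hVAA⟩ : ∃ VA : Matrix (Fin n) (Fin n) ℝ,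
        VA * VA = A⁻¹ ∧ VAᴴ = VA ∧ VA * A = A * VA :=
      ⟨hA.inv.posSemidef.sqrt, hA.inv.posSemidef.sqrt_mul_self,
        hA.inv.posSemidef.posSemidef_sqrt.1, sqrt_commute hA.inv.posSemidef hAinvA⟩
    have h2 : VA * A * VA = 1 := by
      rw [hVAA, Matrix.mul_assoc, hsq, Matrix.mul_nonsing_inv A hAdu]
    have key : VA * (1 - A) * VA = H := by
      calc VA * (1 - A) * VA = VA * VA - VA * A * VA := by noncomm_ring
        _ = A⁻¹ - 1 := by rw [hsq, h2]
    have := hAI.mul_mul_conjTranspose_same VA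
    rwa [hVAH, key] at this
  set R : Matrix (Fin n) (Fin n) ℝ := V * H * V with hRdef
  have hRpsd : R.PosSemidef := by
    have := hHpsd.mul_mul_conjTranspose_same V
    rwa [hVH] at this
  have hKH : K - H = 1 + W * SX⁻¹ * W := by
    rw [hKdef, hHdef]; abel
  have h1R : (1:Matrix (Fin n) (Fin n) ℝ) - R = V * (K - H) * V := by
    rw [Matrix.mul_sub, Matrix.sub_mul, hVKV, hRdef]
  have h1Rpsd : ((1:Matrix (Fin n) (Fin n) ℝ) - R).PosSemidef := by
    rw [h1R, hKH]
    have hpsd : ((1:Matrix (Fin n) (Fin n) ℝ) + W * SX⁻¹ * W).PosSemidef :=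
      Matrix.PosSemidef.one.add hWXW
    have := hpsd.mul_mul_conjTranspose_same V
    rwa [hVH] at this
  -- determinant bookkeeping
  have hdXpos : 0 < SX.det := hX.det_pos
  have hdApos : 0 < A.det := hA.det_pos
  have hWAWpsd : (W * A * W).PosSemidef := by
    have := hA.posSemidef.mul_mul_conjTranspose_same W
    rwa [hWH] at this
  have hdpos : 0 < (SX + W * A * W).det := (hX.add_posSemidef hWAWpsd).det_pos
  have hdXZpos : 0 < (SX + SZ).det := (hX.add_posSemidef hZ).det_pos
  set d : ℝ := (SX + W * A * W).det with hddef
  have F1 : A.det * K.det * SX.det = d := by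
    have hAK : A * K = 1 + (A * (W * SX⁻¹)) * W := by
      rw [hKdef, Matrix.mul_add, Matrix.mul_nonsing_inv A hAdu]
      simp only [Matrix.mul_assoc]
    have e1 : (A * K).det = ((1:Matrix (Fin n) (Fin n) ℝ) + W * (A * (W * SX⁻¹))).det := by
      rw [hAK, Matrix.det_one_add_mul_comm]
    have e3 : W * (A * (W * SX⁻¹)) * SX = W * A * W := by
      calc W * (A * (W * SX⁻¹)) * SX = W * A * W * (SX⁻¹ * SX) := by
            simp only [Matrix.mul_assoc]
        _ = W * A * W := by rw [Matrix.nonsing_inv_mul SX hXdu, Matrix.mul_one]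
    have e2 : ((1:Matrix (Fin n) (Fin n) ℝ) + W * (A * (W * SX⁻¹))) * SX = SX + W * A * W := by
      rw [Matrix.add_mul, Matrix.one_mul, e3]
    calc A.det * K.det * SX.det = (A * K).det * SX.det := by rw [Matrix.det_mul]
      _ = ((1:Matrix (Fin n) (Fin n) ℝ) + W * (A * (W * SX⁻¹))).det * SX.det := by rw [e1]
      _ = (((1:Matrix (Fin n) (Fin n) ℝ) + W * (A * (W * SX⁻¹))) * SX).det := by
          rw [Matrix.det_mul]
      _ = d := by rw [e2, hddef]
  have F2 : A.det * H.det = (1 - A).det := by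
    have hh : A * H = 1 - A := by
      rw [hHdef, Matrix.mul_sub, Matrix.mul_nonsing_inv A hAdu, Matrix.mul_one]
    rw [← Matrix.det_mul, hh]
  have F3 : (K - H).det * SX.det = (SX + SZ).det := by
    have e1 : (K - H).det = ((1:Matrix (Fin n) (Fin n) ℝ) + W * (W * SX⁻¹)).det := by
      rw [hKH]
      have h4 : (1:Matrix (Fin n) (Fin n) ℝ) + W * SX⁻¹ * W = 1 + (W * SX⁻¹) * W := by
        simp only [Matrix.mul_assoc]
      rw [h4, Matrix.det_one_add_mul_comm]
    have e3 : W * (W * SX⁻¹) * SX = SZ := by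
      calc W * (W * SX⁻¹) * SX = (W * W) * (SX⁻¹ * SX) := by simp only [Matrix.mul_assoc]
        _ = SZ := by rw [Matrix.nonsing_inv_mul SX hXdu, hWW, Matrix.mul_one]
    have e2 : ((1:Matrix (Fin n) (Fin n) ℝ) + W * (W * SX⁻¹)) * SX = SX + SZ := by
      rw [Matrix.add_mul, Matrix.one_mul, e3]
    calc (K - H).det * SX.det = (((1:Matrix (Fin n) (Fin n) ℝ) + W * (W * SX⁻¹)) * SX).det := by
          rw [e1, Matrix.det_mul]
      _ = (SX + SZ).det := by rw [e2]
  have hdV2 : V.det * V.det = G.det := by rw [← Matrix.det_mul, hVV]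
  have hdG : G.det = (K.det)⁻¹ := by
    rw [hGdef, Matrix.det_nonsing_inv, Ring.inverse_eq_inv']
  have hKdne : K.det ≠ 0 := hK.det_pos.ne'
  have hdR : R.det * d = (1 - A).det * SX.det := by
    have hRdet : R.det = (K.det)⁻¹ * H.det := by
      rw [hRdef, Matrix.det_mul, Matrix.det_mul]
      calc V.det * H.det * V.det = (V.det * V.det) * H.det := by ring
        _ = (K.det)⁻¹ * H.det := by rw [hdV2, hdG]
    rw [hRdet, ← F1, ← F2]
    field_simp
  have hd1R : ((1:Matrix (Fin n) (Fin n) ℝ) - R).det * d = A.det * (SX + SZ).det := by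
    have h1Rdet : ((1:Matrix (Fin n) (Fin n) ℝ) - R).det = (K.det)⁻¹ * (K - H).det := by
      rw [h1R, Matrix.det_mul, Matrix.det_mul]
      calc V.det * (K - H).det * V.det = (V.det * V.det) * (K - H).det := by ring
        _ = (K.det)⁻¹ * (K - H).det := by rw [hdV2, hdG]
    rw [h1Rdet, ← F1, ← F3]
    field_simp
  -- final chain
  have hMah := mahler_det hn hRpsd h1Rpsd
  have hRdet0 : 0 ≤ R.det := psd_det_nonneg hRpsd
  have h1Rdet0 : 0 ≤ ((1:Matrix (Fin n) (Fin n) ℝ) - R).det := psd_det_nonneg h1Rpsd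
  have e1 : (1 - A).det ^ ((n:ℝ)⁻¹) * SX.det ^ ((n:ℝ)⁻¹)
      = R.det ^ ((n:ℝ)⁻¹) * d ^ ((n:ℝ)⁻¹) := by
    rw [← Real.mul_rpow (psd_det_nonneg hAI) hdXpos.le, ← hdR,
      Real.mul_rpow hRdet0 hdpos.le]
  have e2 : A.det ^ ((n:ℝ)⁻¹) * (SX + SZ).det ^ ((n:ℝ)⁻¹)
      = ((1:Matrix (Fin n) (Fin n) ℝ) - R).det ^ ((n:ℝ)⁻¹) * d ^ ((n:ℝ)⁻¹) := by
    rw [← Real.mul_rpow hdApos.le hdXZpos.le, ← hd1R,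
      Real.mul_rpow h1Rdet0 hdpos.le]
  rw [e1, e2, ← add_mul]
  calc (R.det ^ ((n:ℝ)⁻¹) + ((1:Matrix (Fin n) (Fin n) ℝ) - R).det ^ ((n:ℝ)⁻¹)) * d ^ ((n:ℝ)⁻¹)
      ≤ 1 * d ^ ((n:ℝ)⁻¹) := by
        apply mul_le_mul_of_nonneg_right hMah
        positivity
    _ = d ^ ((n:ℝ)⁻¹) := one_mul _

theorem stmt_9 {n : ℕ} (hn : 0 < n) (A SZ SX : Matrix (Fin n) (Fin n) ℝ)
    (hA : A.PosDef) (hZ : SZ.PosDef) (hX : SX.PosDef)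
    (hAI : (1 - A).PosSemidef) (hcomm : A * SZ = SZ * A) :
    (SX + hA.posSemidef.sqrt * SZ * hA.posSemidef.sqrt).det ^ ((n : ℝ)⁻¹) ≥
      (1 - A).det ^ ((n : ℝ)⁻¹) * SX.det ^ ((n : ℝ)⁻¹) +
        A.det ^ ((n : ℝ)⁻¹) * (SX + SZ).det ^ ((n : ℝ)⁻¹) := by
  obtain ⟨W, hWW, hWH, hWA⟩ : ∃ W : Matrix (Fin n) (Fin n) ℝ,
      W * W = SZ ∧ Wᴴ = W ∧ W * A = A * W :=
    ⟨hZ.posSemidef.sqrt, hZ.posSemidef.sqrt_mul_self,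
      hZ.posSemidef.posSemidef_sqrt.1, sqrt_commute hZ.posSemidef hcomm.symm⟩
  have hTST : hA.posSemidef.sqrt * SZ * hA.posSemidef.sqrt = W * A * W := by
    have h1 : hA.posSemidef.sqrt * SZ = SZ * hA.posSemidef.sqrt :=
      sqrt_commute hA.posSemidef hcomm
    rw [h1, Matrix.mul_assoc, hA.posSemidef.sqrt_mul_self]
    calc SZ * A = A * SZ := hcomm.symm
      _ = A * (W * W) := by rw [hWW]
      _ = (A * W) * W := by rw [Matrix.mul_assoc]
      _ = W * A * W := by rw [← hWA]
  rw [ge_iff_le, hTST]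
  exact main_aux hn A SZ SX W hA hZ.posSemidef hX hAI hWW hWH hWA
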